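/- Let A be a bounded operator on a complex Hilbert space H and suppose there exists T ∈ B(H) with ‖T‖ ≤ 1, TA = |A|, and T|A| = |A|T. Then A = T*|A|, and A is quasinormal (U|A| = |A|U for the partial isometry U in the polar decomposition of A). -/

import Mathlib

open ContinuousLinearMap
open scoped ComplexInnerProductSpace


open scoped ComplexInnerProductSpace in
private lemma aux_vanish {H : Type*} [NormedAddCommGroup H]
    [InnerProductSpace ℂ H] [CompleteSpace H]
    (absA D : H →L[ℂ] H)
    (hsa : ContinuousLinearMap.adjoint absA = absA)
    (h1 : D ∘L absA = 0)
    (h2 : ∀ h, absA h = 0 → D h = 0) : D = 0 := by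
  have hDadj : ContinuousLinearMap.adjoint D = 0 := by
    ext g
    have hmem : absA (ContinuousLinearMap.adjoint D g) = 0 := by
      have h3 := congrArg ContinuousLinearMap.adjoint h1
      rw [adjoint_comp, hsa, map_zero] at h3
      have happ2 : absA (ContinuousLinearMap.adjoint D g) =
          (absA ∘L ContinuousLinearMap.adjoint D) g := rfl
      rw [happ2, h3, ContinuousLinearMap.zero_apply]
    have hinner : (⟪ContinuousLinearMap.adjoint D g, ContinuousLinearMap.adjoint D g⟫) = 0 := by
      have h4 : (⟪ContinuousLinearMap.adjoint D g, ContinuousLinearMap.adjoint D g⟫)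
          = ⟪D (ContinuousLinearMap.adjoint D g), g⟫ :=
        adjoint_inner_right D (ContinuousLinearMap.adjoint D g) g
      rw [h4, h2 _ hmem, inner_zero_left]
    simpa using inner_self_eq_zero.mp hinner
  have h5 := congrArg ContinuousLinearMap.adjoint hDadj
  rwa [adjoint_adjoint, map_zero] at h5

/-- If there is a contraction `T` with `T A = |A|` and `T |A| = |A| T`, then `A = T* |A|` and
`A` is quasinormal: `U|A| = |A|U` for the partial isometry `U` in the polar decomposition. -/
theorem contraction_implies_quasinormal {H : Type*} [NormedAddCommGroup H]
    [InnerProductSpace ℂ H] [CompleteSpace H]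
    (A T U absA : H →L[ℂ] H)
    (habs_pos : absA.IsPositive)
    (habs_sq : absA ∘L absA = ContinuousLinearMap.adjoint A ∘L A)
    (hU1 : A = U ∘L absA)
    (hU2 : ∀ f, ‖U (absA f)‖ = ‖absA f‖)
    (hU3 : ∀ h, A h = 0 → U h = 0)
    (hTnorm : ‖T‖ ≤ 1)
    (hTA : T ∘L A = absA)
    (hcomm : T ∘L absA = absA ∘L T) :
    A = ContinuousLinearMap.adjoint T ∘L absA ∧ U ∘L absA = absA ∘L U := by
  have hsa : ContinuousLinearMap.adjoint absA = absA := habs_pos.isSelfAdjoint.adjoint_eq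
  have happ : ∀ (S S' : H →L[ℂ] H), S ∘L S' = absA ∘L absA → ∀ f, S (S' f) = absA (absA f) := by
    intro S S' h f
    exact congrFun (congrArg (fun (R : H →L[ℂ] H) => (R : H → H)) h) f
  -- ‖absA f‖ = ‖A f‖
  have hnorm : ∀ f, ‖absA f‖ = ‖A f‖ := by
    intro f
    have h1 : (⟪absA f, absA f⟫) = ⟪A f, A f⟫ := by
      have hsq : absA (absA f) = ContinuousLinearMap.adjoint A (A f) :=
        congrFun (congrArg (fun (R : H →L[ℂ] H) => (R : H → H)) habs_sq) f
      calc (⟪absA f, absA f⟫) = ⟪f, absA (absA f)⟫ := by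
            rw [← adjoint_inner_left absA (absA f) f, hsa]
        _ = ⟪f, ContinuousLinearMap.adjoint A (A f)⟫ := by rw [hsq]
        _ = ⟪A f, A f⟫ := by rw [adjoint_inner_right]
    rw [inner_self_eq_norm_sq_to_K, inner_self_eq_norm_sq_to_K] at h1
    have h2 : ‖absA f‖ ^ 2 = ‖A f‖ ^ 2 := by exact_mod_cast h1
    nlinarith [norm_nonneg (absA f), norm_nonneg (A f)]
  -- contraction lemma: T* T (A f) = A f
  have hTT : ∀ f, ContinuousLinearMap.adjoint T (T (A f)) = A f := by
    intro f
    set x := A f with hx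
    have hTx : ‖T x‖ = ‖x‖ := by
      have hTAf : T x = absA f :=
        congrFun (congrArg (fun (R : H →L[ℂ] H) => (R : H → H)) hTA) f
      rw [hTAf, hnorm]
    have hball : ‖ContinuousLinearMap.adjoint T (T x)‖ ≤ ‖x‖ := by
      calc ‖ContinuousLinearMap.adjoint T (T x)‖ ≤ ‖ContinuousLinearMap.adjoint T‖ * ‖T x‖ :=
            (ContinuousLinearMap.adjoint T).le_opNorm _
        _ ≤ 1 * ‖x‖ := by
            rw [hTx]
            have h2 : ‖ContinuousLinearMap.adjoint T‖ = ‖T‖ :=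
              LinearIsometryEquiv.norm_map ContinuousLinearMap.adjoint T
            exact mul_le_mul_of_nonneg_right (h2 ▸ hTnorm) (norm_nonneg x)
        _ = ‖x‖ := one_mul _
    have hre : RCLike.re (⟪ContinuousLinearMap.adjoint T (T x), x⟫) = ‖x‖ ^ 2 := by
      rw [adjoint_inner_left, inner_self_eq_norm_sq (𝕜 := ℂ) (T x), hTx]
    have hz : ‖ContinuousLinearMap.adjoint T (T x) - x‖ ^ 2 ≤ 0 := by
      rw [norm_sub_sq (𝕜 := ℂ), hre]
      nlinarith [norm_nonneg (ContinuousLinearMap.adjoint T (T x)), norm_nonneg x]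
    have hzero : ContinuousLinearMap.adjoint T (T x) - x = 0 := by
      have hnn := norm_nonneg (ContinuousLinearMap.adjoint T (T x) - x)
      have hn : ‖ContinuousLinearMap.adjoint T (T x) - x‖ = 0 := by nlinarith
      exact norm_eq_zero.mp hn
    exact sub_eq_zero.mp hzero
  -- First conclusion: A = T* ∘ absA
  have hA : A = ContinuousLinearMap.adjoint T ∘L absA := by
    ext f
    have hTAf : T (A f) = absA f :=
      congrFun (congrArg (fun (R : H →L[ℂ] H) => (R : H → H)) hTA) f
    have := hTT f
    rw [hTAf] at this
    simpa using this.symm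
  -- T* commutes with absA
  have hcomm' : ContinuousLinearMap.adjoint T ∘L absA = absA ∘L ContinuousLinearMap.adjoint T := by
    have := congrArg ContinuousLinearMap.adjoint hcomm
    rw [adjoint_comp, adjoint_comp, hsa] at this
    exact this.symm
  -- D := absA ∘ U - T* ∘ absA vanishes
  have hDabs : (absA ∘L U - ContinuousLinearMap.adjoint T ∘L absA) ∘L absA = 0 := by
    ext g
    have h1 : U (absA g) = A g :=
      (congrFun (congrArg (fun (R : H →L[ℂ] H) => (R : H → H)) hU1) g).symm
    have h2 : A g = ContinuousLinearMap.adjoint T (absA g) :=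
      congrFun (congrArg (fun (R : H →L[ℂ] H) => (R : H → H)) hA) g
    have h3 : absA (ContinuousLinearMap.adjoint T (absA g))
        = ContinuousLinearMap.adjoint T (absA (absA g)) :=
      (congrFun (congrArg (fun (R : H →L[ℂ] H) => (R : H → H)) hcomm') (absA g)).symm
    simp only [ContinuousLinearMap.sub_apply, ContinuousLinearMap.comp_apply,
      ContinuousLinearMap.zero_apply, ContinuousLinearMap.coe_comp', Function.comp_apply,
      ContinuousLinearMap.coe_sub']
    rw [h1, h2, h3]
    simp
  have hDker : ∀ h, absA h = 0 →
      (absA ∘L U - ContinuousLinearMap.adjoint T ∘L absA) h = 0 := by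
    intro h hh
    have hAh : A h = 0 := by
      have h2 : A h = ContinuousLinearMap.adjoint T (absA h) :=
        congrFun (congrArg (fun (R : H →L[ℂ] H) => (R : H → H)) hA) h
      rw [h2, hh, map_zero]
    have hUh : U h = 0 := hU3 h hAh
    simp only [ContinuousLinearMap.sub_apply, ContinuousLinearMap.coe_comp',
      Function.comp_apply, ContinuousLinearMap.coe_sub']
    rw [hUh, hh]
    simp
  have hDzero : absA ∘L U - ContinuousLinearMap.adjoint T ∘L absA = 0 :=
    aux_vanish absA _ hsa hDabs hDker
  have hBC : absA ∘L U = ContinuousLinearMap.adjoint T ∘L absA := sub_eq_zero.mp hDzero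
  refine ⟨hA, ?_⟩
  rw [← hU1, hA, hBC]
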